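/- Let m be a positive integer, let α be a complex number of modulus 1 with α ≠ 1 and α ≠ −1, and set a = Re α. Then the polynomial z^m − α has a zero in the subfield ℚ(α) of ℂ generated by α if and only if there exists a real number b in the subfield ℚ(a) of ℝ generated by a with T_m(b) = a. -/

import Mathlib

open Polynomial Complex
private lemma T_parity (x : ℝ) (n : ℕ) :
    ((Chebyshev.T ℝ n).eval (-x) = (-1)^n * (Chebyshev.T ℝ n).eval x) ∧
    ((Chebyshev.T ℝ (n+1)).eval (-x) = (-1)^(n+1) * (Chebyshev.T ℝ (n+1)).eval x) := by
  induction n with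
  | zero => simp
  | succ n ih =>
    obtain ⟨h1, h2⟩ := ih
    refine ⟨h2, ?_⟩
    have hc : ((n+1+1 : ℕ) : ℤ) = (n : ℤ) + 2 := by push_cast; ring
    have hc1 : ((n+1 : ℕ) : ℤ) = (n : ℤ) + 1 := by push_cast; ring
    have hc2 : ((n:ℤ)+1)+1 = (n : ℤ) + 2 := by ring
    rw [hc1, hc2, Chebyshev.T_add_two]
    simp only [eval_sub, eval_mul, eval_X, eval_ofNat] at *
    rw [h2, h1]
    ring

private lemma T_ge_one {x : ℝ} (hx : 1 ≤ x) (n : ℕ) :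
    (1 ≤ (Chebyshev.T ℝ n).eval x) ∧
      ((Chebyshev.T ℝ n).eval x ≤ (Chebyshev.T ℝ (n+1)).eval x) := by
  induction n with
  | zero => simp [hx]
  | succ n ih =>
    obtain ⟨h1, h2⟩ := ih
    have hg : 1 ≤ (Chebyshev.T ℝ (n+1:ℕ)).eval x := le_trans h1 h2
    refine ⟨hg, ?_⟩
    have hc : ((n+1+1 : ℕ) : ℤ) = (n : ℤ) + 2 := by push_cast; ring
    have hc1 : ((n+1 : ℕ) : ℤ) = (n : ℤ) + 1 := by push_cast; ring
    have hc2 : ((n:ℤ)+1)+1 = (n : ℤ) + 2 := by ring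
    rw [hc1] at hg ⊢
    rw [hc2, Chebyshev.T_add_two]
    simp only [eval_sub, eval_mul, eval_X, eval_ofNat] at *
    nlinarith

set_option maxHeartbeats 1000000 in
theorem exists_mth_root_iff_chebyshev_root (m : ℕ) (hm : 0 < m) (α : ℂ)
    (hα : ‖α‖ = 1) (hα1 : α ≠ 1) (hα1' : α ≠ -1) :
    (∃ β ∈ Subfield.closure ({α} : Set ℂ), β ^ m = α) ↔
    ∃ b ∈ Subfield.closure ({α.re} : Set ℝ), (Chebyshev.T ℝ m).eval b = α.re := by
  set a := α.re with ha
  set e := α.im with he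
  set F := Subfield.closure ({a} : Set ℝ) with hF
  set K := Subfield.closure ({α} : Set ℂ) with hK
  have hsq : a^2 + e^2 = 1 := by
    have h := Complex.sq_norm α
    rw [hα] at h
    simp only [Complex.normSq_apply, one_pow] at h
    rw [← ha, ← he] at h
    nlinarith
  have he0 : e ≠ 0 := by
    intro h
    have h2 : α = (a : ℂ) := Complex.ext (by simp [ha]) (by simp [← he, h])
    have h3 : a = 1 ∨ a = -1 := by
      have h4 : (a - 1) * (a + 1) = 0 := by nlinarith
      rcases mul_eq_zero.mp h4 with h4 | h4
      · left; linarith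
      · right; linarith
    rcases h3 with h3 | h3
    · exact hα1 (by rw [h2, h3]; norm_num)
    · exact hα1' (by rw [h2, h3]; norm_num)
  have hαK : α ∈ K := Subfield.subset_closure rfl
  have haF : a ∈ F := Subfield.subset_closure rfl
  have hnorm : Complex.normSq α = 1 := by
    have := Complex.sq_norm α; rw [hα] at this; nlinarith [this]
  have hαinv : α⁻¹ = 2*(a:ℂ) - α := by
    rw [Complex.inv_def, hnorm]
    have : (starRingEnd ℂ) α = 2*(a:ℂ) - α := by
      apply Complex.ext <;> simp [Complex.conj_re, Complex.conj_im] <;> ring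
    rw [this]; simp
  have h2K : (2:ℂ) ∈ K := by
    rw [(by norm_num : (2:ℂ) = 1 + 1)]; exact add_mem (one_mem K) (one_mem K)
  have h2F : (2:ℝ) ∈ F := by
    rw [(by norm_num : (2:ℝ) = 1 + 1)]; exact add_mem (one_mem F) (one_mem F)
  have haK : (a : ℂ) ∈ K := by
    have h2 : (a:ℂ) = (α + α⁻¹)/2 := by rw [hαinv]; ring
    rw [h2]
    exact div_mem (add_mem hαK (inv_mem hαK)) h2K
  have hα2 : α^2 = 2*(a:ℂ)*α - 1 := by
    have h0 : α ≠ 0 := by intro h; rw [h] at hα; simp at hα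
    have := hαinv
    field_simp at this
    linear_combination this
  have coeF : ∀ x : ℝ, x ∈ F → (x:ℂ) ∈ K := by
    intro x hx
    induction hx using Subfield.closure_induction with
    | mem y hy => rw [Set.mem_singleton_iff] at hy; rw [hy]; exact haK
    | one => simpa using one_mem K
    | add x y hx hy ihx ihy => push_cast; exact add_mem ihx ihy
    | neg x hx ihx => push_cast; exact neg_mem ihx
    | inv x hx ihx => push_cast; exact inv_mem ihx
    | mul x y hx hy ihx ihy => push_cast; exact mul_mem ihx ihy
  have span : ∀ z ∈ K, ∃ x y : ℝ, x ∈ F ∧ y ∈ F ∧ z = x + y*α := by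
    intro z hz
    induction hz using Subfield.closure_induction with
    | mem w hw =>
      rw [Set.mem_singleton_iff] at hw
      exact ⟨0, 1, zero_mem F, one_mem F, by rw [hw]; push_cast; ring⟩
    | one => exact ⟨1, 0, one_mem F, zero_mem F, by push_cast; ring⟩
    | add z w hz hw ihz ihw =>
      obtain ⟨x, y, hx, hy, rfl⟩ := ihz
      obtain ⟨x', y', hx', hy', rfl⟩ := ihw
      exact ⟨x + x', y + y', add_mem hx hx', add_mem hy hy', by push_cast; ring⟩
    | neg z hz ihz =>
      obtain ⟨x, y, hx, hy, rfl⟩ := ihz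
      exact ⟨-x, -y, neg_mem hx, neg_mem hy, by push_cast; ring⟩
    | mul z w hz hw ihz ihw =>
      obtain ⟨x, y, hx, hy, rfl⟩ := ihz
      obtain ⟨x', y', hx', hy', rfl⟩ := ihw
      refine ⟨x*x' - y*y', x*y' + y*x' + 2*a*(y*y'),
        sub_mem (mul_mem hx hx') (mul_mem hy hy'),
        add_mem (add_mem (mul_mem hx hy') (mul_mem hy hx'))
          (mul_mem (mul_mem h2F haF) (mul_mem hy hy')), ?_⟩
      push_cast
      linear_combination ((y : ℂ) * (y' : ℂ)) * hα2
    | inv z hz ihz =>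
      obtain ⟨x, y, hx, hy, rfl⟩ := ihz
      by_cases hz0 : (x : ℂ) + y*α = 0
      · exact ⟨0, 0, zero_mem F, zero_mem F, by rw [hz0]; push_cast; simp⟩
      · set N : ℝ := x^2 + 2*a*x*y + y^2 with hN
        have hre : ((x:ℂ) + y*α).re = x + y*a := by simp [Complex.add_re, Complex.mul_re, ← ha]
        have him : ((x:ℂ) + y*α).im = y*e := by simp [Complex.add_im, Complex.mul_im, ← he]
        have hNnorm : Complex.normSq ((x:ℂ) + y*α) = N := by
          rw [Complex.normSq_apply, hre, him, hN]; nlinarith [hsq]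
        have hN0 : N ≠ 0 := by
          rw [← hNnorm]; exact (Complex.normSq_pos.mpr hz0).ne'
        have hNF : N ∈ F := by
          rw [hN]
          exact add_mem (add_mem (pow_mem hx 2) (mul_mem (mul_mem (mul_mem h2F haF) hx) hy)) (pow_mem hy 2)
        refine ⟨(x + 2*a*y)/N, -y/N, div_mem (add_mem hx (mul_mem (mul_mem h2F haF) hy)) hNF,
          div_mem (neg_mem hy) hNF, ?_⟩
        have hNC : (N:ℂ) ≠ 0 := by exact_mod_cast hN0
        apply inv_eq_of_mul_eq_one_right
        push_cast
        field_simp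
        have hNC2 : (N:ℂ) = (x:ℂ)^2 + 2*(a:ℂ)*x*y + (y:ℂ)^2 := by
          rw [hN]; push_cast; ring
        linear_combination (-(y:ℂ)^2) * hα2 - hNC2
  have evalF : ∀ (n : ℤ) (x : ℝ), x ∈ F → (Chebyshev.U ℝ n).eval x ∈ F := by
    intro n x hx
    have h1 : (Chebyshev.U ℝ n) = (Chebyshev.U F n).map F.subtype :=
      (Chebyshev.map_U F.subtype n).symm
    have h2 : (Chebyshev.U ℝ n).eval x = F.subtype ((Chebyshev.U F n).eval ⟨x, hx⟩) := by
      rw [h1, eval_map]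
      exact Polynomial.eval₂_at_apply F.subtype ⟨x, hx⟩
    rw [h2]
    exact SetLike.coe_mem _
  constructor
  · rintro ⟨β, hβK, hβm⟩
    have habs : ‖β‖ = 1 := by
      have h1 : ‖β‖ ^ m = 1 := by rw [← norm_pow, hβm, hα]
      rcases (pow_eq_one_iff_cases).mp h1 with h | h | h
      · omega
      · exact h
      · exfalso; nlinarith [norm_nonneg β, h.1]
    obtain ⟨x, y, hx, hy, hxy⟩ := span β hβK
    have hbF : β.re ∈ F := by
      have : β.re = x + y * a := by
        rw [hxy]; simp [Complex.add_re, Complex.mul_re, ← ha]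
      rw [this]
      exact add_mem hx (mul_mem hy haF)
    refine ⟨β.re, hbF, ?_⟩
    set θ := β.arg with hθ
    have hβe : β = Complex.exp (θ * Complex.I) := by
      conv_lhs => rw [← Complex.norm_mul_exp_arg_mul_I β]
      rw [habs, Complex.ofReal_one, one_mul]
    have hre : β.re = Real.cos θ := by
      conv_lhs => rw [hβe]
      rw [Complex.exp_ofReal_mul_I_re]
    rw [hre, Chebyshev.T_real_cos]
    have hαexp : α = Complex.exp ((m * θ : ℝ) * Complex.I) := by
      rw [← hβm, hβe, ← Complex.exp_nat_mul]
      congr 1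
      push_cast
      ring
    have := congrArg Complex.re hαexp
    rw [Complex.exp_ofReal_mul_I_re] at this
    rw [← ha] at this
    push_cast
    exact this.symm
  · rintro ⟨b, hbF, hbT⟩
    have he2 : 0 < e^2 := by
      have h1 : e^2 ≠ 0 := pow_ne_zero _ he0
      exact lt_of_le_of_ne (sq_nonneg e) (Ne.symm h1)
    have ha1 : a^2 < 1 := by nlinarith
    have hb : -1 < b ∧ b < 1 := by
      constructor
      · by_contra h
        push_neg at h
        have h1 := (T_ge_one (x := -b) (by linarith) m).1
        have hp := (T_parity b m).1
        rw [hp, hbT] at h1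
        rcases Nat.even_or_odd m with hev | hod
        · rw [hev.neg_one_pow] at h1; nlinarith
        · rw [hod.neg_one_pow] at h1; nlinarith
      · by_contra h
        push_neg at h
        have h1 := (T_ge_one (x := b) h m).1
        rw [hbT] at h1; nlinarith
    set φ := Real.arccos b with hφ
    have hcos : Real.cos φ = b := Real.cos_arccos (by linarith [hb.1]) (by linarith [hb.2])
    have hTm : Real.cos (m * φ) = a := by
      have h1 := Chebyshev.T_real_cos φ m
      rw [hcos, hbT] at h1
      push_cast at h1 ⊢
      exact h1.symm
    set u := (Chebyshev.U ℝ ((m:ℤ) - 1)).eval b with hu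
    have hUs : u * Real.sin φ = Real.sin (m * φ) := by
      have h1 := Chebyshev.U_real_cos φ ((m:ℤ) - 1)
      rw [hcos] at h1
      rw [hu, h1]
      norm_num
    have hsin2 : Real.sin (m*φ)^2 = e^2 := by
      have h1 := Real.sin_sq_add_cos_sq (m*φ)
      rw [hTm] at h1
      nlinarith
    have hcase : Real.sin (m*φ) = e ∨ Real.sin (m*φ) = -e := by
      have h1 : (Real.sin (m*φ) - e) * (Real.sin (m*φ) + e) = 0 := by nlinarith
      rcases mul_eq_zero.mp h1 with h1 | h1
      · left; linarith
      · right; linarith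
    have hsm0 : Real.sin (m*φ) ≠ 0 := by
      rcases hcase with h | h <;> rw [h]
      · exact he0
      · exact neg_ne_zero.mpr he0
    have hu0 : u ≠ 0 := by
      intro h
      rw [h, zero_mul] at hUs
      exact hsm0 hUs.symm
    have huF : u ∈ F := evalF _ _ hbF
    set β : ℂ := (b:ℂ) + (α - (a:ℂ))/(u:ℂ) with hβ
    have hβK : β ∈ K := add_mem (coeF b hbF) (div_mem (sub_mem hαK haK) (coeF u huF))
    refine ⟨β, hβK, ?_⟩
    have hαeq : α - (a:ℂ) = (e:ℂ) * Complex.I := by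
      apply Complex.ext <;> simp [← ha, ← he]
    have huC : (u:ℂ) ≠ 0 := by exact_mod_cast hu0
    have hβ2 : β = (b:ℂ) + ((e/u : ℝ) : ℂ) * Complex.I := by
      rw [hβ, hαeq]
      push_cast
      field_simp
    rcases hcase with hc | hc
    · have heu : e/u = Real.sin φ := by
        rw [← hc, ← hUs]
        field_simp
      have hβexp : β = Complex.exp ((φ:ℝ) * Complex.I) := by
        rw [hβ2, heu, Complex.exp_mul_I]
        rw [← Complex.ofReal_cos, ← Complex.ofReal_sin, hcos]
      rw [hβexp, ← Complex.exp_nat_mul]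
      have h3 : ((m:ℂ)) * ((φ:ℂ) * Complex.I) = ((m*φ : ℝ):ℂ) * Complex.I := by
        push_cast; ring
      rw [h3]
      apply Complex.ext
      · rw [Complex.exp_ofReal_mul_I_re, hTm]
      · rw [Complex.exp_ofReal_mul_I_im, hc]
    · have h4 : u * Real.sin φ = -e := by rw [hUs, hc]
      have heu : e/u = -Real.sin φ := by
        rw [div_eq_iff hu0]
        linear_combination h4
      have hβexp : β = Complex.exp (((-φ : ℝ):ℂ) * Complex.I) := by
        rw [hβ2, heu, Complex.exp_mul_I]
        rw [← Complex.ofReal_cos, ← Complex.ofReal_sin, Real.cos_neg, Real.sin_neg, hcos]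
      rw [hβexp, ← Complex.exp_nat_mul]
      have h3 : ((m:ℂ)) * (((-φ:ℝ):ℂ) * Complex.I) = ((-(m*φ) : ℝ):ℂ) * Complex.I := by
        push_cast; ring
      rw [h3]
      apply Complex.ext
      · rw [Complex.exp_ofReal_mul_I_re, Real.cos_neg, hTm]
      · rw [Complex.exp_ofReal_mul_I_im, Real.sin_neg, hc]
        simp [he]
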